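/- Fix a fooling set (S_1, T_1), ..., (S_r, T_r) for the connectivity function f (f(S,T)=0 iff the induced subgraph of T on S is connected) with S_i ⊆ [n], |S_i| > 1, T_i trees on [n]. Then for every fixed k ∈ [r], the number of indices i ∈ [r] with f(S_i, T_k) = 0 is at most n(n-1). -/

import Mathlib

open SimpleGraph

/-- If every `A`-adjacency implies `B`-reachability, then `A`-reachability implies
`B`-reachability. -/
private lemma reachable_mono_adj {V : Type*} {A B : SimpleGraph V}
    (h : ∀ a b, A.Adj a b → B.Reachable a b) {x y : V} (hr : A.Reachable x y) :
    B.Reachable x y := by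
  rw [SimpleGraph.reachable_iff_reflTransGen] at hr
  induction hr with
  | refl => exact Reachable.refl _
  | tail _ hadj ih => exact ih.trans (h _ _ hadj)

/-- A walk whose support lies in `Sv` lifts to reachability in the induced graph. -/
private lemma reachable_induce_of_walk {V : Type*} {G : SimpleGraph V} {Sv : Set V} :
    ∀ {u v : V} (p : G.Walk u v), (∀ x ∈ p.support, x ∈ Sv) →
      ∀ (hu : u ∈ Sv) (hv : v ∈ Sv), (G.induce Sv).Reachable ⟨u, hu⟩ ⟨v, hv⟩ := by
  intro u v p
  induction p with
  | nil => intro _ hu hv; exact Reachable.refl _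
  | @cons a b c hab q ih =>
    intro hsup hu hv
    have hb : b ∈ Sv := hsup b (by simp)
    have h1 : (G.induce Sv).Adj ⟨a, hu⟩ ⟨b, hb⟩ := by
      simp [SimpleGraph.comap_adj, hab]
    exact (h1.reachable).trans (ih (fun x hx => hsup x (by simp [hx])) hb hv)

/-- Key impossibility: if `u v ∈ Si`, `w ∉ Si`, every `Tj`-walk from `u` to `v` passes
through `w`, then `Tj.induce Si` cannot be connected. -/
private lemma no_both {n : ℕ} {Si : Set (Fin n)} {Tj : SimpleGraph (Fin n)} {u v w : Fin n}
    (hu : u ∈ Si) (hv : v ∈ Si) (hw : w ∉ Si)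
    (hwalk : ∀ p : Tj.Walk u v, w ∈ p.support)
    (hconn : (Tj.induce Si).Connected) : False := by
  obtain ⟨p⟩ := hconn.preconnected ⟨u, hu⟩ ⟨v, hv⟩
  have hp := hwalk (p.map (SimpleGraph.Embedding.induce Si).toHom)
  erw [SimpleGraph.Walk.support_map] at hp
  obtain ⟨x, hx, hxe⟩ := List.mem_map.mp hp
  exact hw (hxe ▸ x.2)

/-- Existence of the witness triple. -/
private lemma exists_witness {n : ℕ} {Sv : Set (Fin n)} {Tk Ti : SimpleGraph (Fin n)}
    (hTi : Ti.IsTree) (hnot : ¬ (Ti.induce Sv).Connected)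
    (hconn : (Tk.induce Sv).Connected) :
    ∃ u v w : Fin n, Tk.Adj u v ∧ u ∈ Sv ∧ v ∈ Sv ∧ w ∉ Sv ∧
      ∀ p : Ti.Walk u v, w ∈ p.support := by
  -- Step A: find an edge of `Tk` inside `Sv` joining different components of `Ti.induce Sv`.
  have hA : ∃ u v : Sv, Tk.Adj u v ∧ ¬ (Ti.induce Sv).Reachable u v := by
    by_contra hA
    push_neg at hA
    refine hnot ?_
    rw [SimpleGraph.connected_iff]
    refine ⟨fun x y => ?_, hconn.nonempty⟩
    refine reachable_mono_adj (fun a b hab => ?_) (hconn.preconnected x y)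
    exact hA a b (by simpa using hab)
  obtain ⟨u, v, hadj, hnr⟩ := hA
  -- Step B: a vertex outside `Sv` on the unique `Ti`-path between `u` and `v`.
  obtain ⟨p0⟩ := hTi.isConnected.preconnected u.1 v.1
  have hq : ∃ w ∈ p0.bypass.support, w ∉ Sv := by
    by_contra hall
    push_neg at hall
    exact hnr (reachable_induce_of_walk p0.bypass hall u.2 v.2)
  obtain ⟨w, hwq, hwns⟩ := hq
  refine ⟨u.1, v.1, w, hadj, u.2, v.2, hwns, fun p => ?_⟩
  have := (hTi.existsUnique_path u.1 v.1).unique p.bypass_isPath p0.bypass_isPath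
  exact p.support_bypass_subset (this ▸ hwq)

theorem stmt_8 {n r : ℕ} (S : Fin r → Set (Fin n))
    (T : Fin r → SimpleGraph (Fin n))
    (hT : ∀ i, (T i).IsTree) (hS : ∀ i, 1 < (S i).ncard)
    (hdiag : ∀ j, ¬ ((T j).induce (S j)).Connected)
    (hoff : ∀ i j, i ≠ j →
      ((T j).induce (S i)).Connected ∨ ((T i).induce (S j)).Connected)
    (k : Fin r) :
    {i : Fin r | ((T k).induce (S i)).Connected}.ncard ≤ n * (n - 1) := by
  classical
  set Z := {i : Fin r | ((T k).induce (S i)).Connected} with hZ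
  by_cases hZe : Z = ∅
  · simp [hZe]
  · obtain ⟨i0, hi0⟩ := Set.nonempty_iff_ne_empty.mpr hZe
    have hnn : (S i0).Nonempty := by
      exact Set.nonempty_of_ncard_ne_zero (by have := hS i0; omega)
    have hne : Nonempty (Fin n) := ⟨hnn.choose⟩
    -- choose witnesses
    have key : ∀ i, ∃ u v w : Fin n, i ∈ Z →
        (T k).Adj u v ∧ u ∈ S i ∧ v ∈ S i ∧ w ∉ S i ∧
          ∀ p : (T i).Walk u v, w ∈ p.support := by
      intro i
      by_cases hi : i ∈ Z
      · obtain ⟨u, v, w, h⟩ := exists_witness (hT i) (hdiag i) hi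
        exact ⟨u, v, w, fun _ => h⟩
      · exact ⟨Classical.arbitrary _, Classical.arbitrary _, Classical.arbitrary _,
          fun h => absurd h hi⟩
    choose u v w hprop using key
    set f : Fin r → Sym2 (Fin n) × Fin n := fun i => (s(u i, v i), w i) with hf
    have hmaps : ∀ i ∈ Z, f i ∈ ((T k).edgeSet ×ˢ (Set.univ : Set (Fin n))) := by
      intro i hi
      exact ⟨(SimpleGraph.mem_edgeSet _).mpr (hprop i hi).1, Set.mem_univ _⟩
    have hinj : Set.InjOn f Z := by
      intro i hi j hj hfij
      by_contra hij
      obtain ⟨hadj_i, hui, hvi, hwi, hwalk_i⟩ := hprop i hi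
      obtain ⟨hadj_j, huj, hvj, hwj, hwalk_j⟩ := hprop j hj
      have he : s(u i, v i) = s(u j, v j) := congrArg Prod.fst hfij
      have hwe : w i = w j := congrArg Prod.snd hfij
      rw [Sym2.eq_iff] at he
      -- every `T j`-walk from `u i` to `v i` passes through `w i`
      have hwalk_j' : ∀ p : (T j).Walk (u i) (v i), w i ∈ p.support := by
        rcases he with ⟨h1, h2⟩ | ⟨h1, h2⟩
        · intro p
          have := hwalk_j (p.copy h1 h2)
          rwa [SimpleGraph.Walk.support_copy, ← hwe] at this
        · intro p
          have := hwalk_j (p.reverse.copy h2 h1)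
          rwa [SimpleGraph.Walk.support_copy, SimpleGraph.Walk.support_reverse,
            List.mem_reverse, ← hwe] at this
      have huij : u i ∈ S j ∧ v i ∈ S j := by
        rcases he with ⟨h1, h2⟩ | ⟨h1, h2⟩
        · exact ⟨h1 ▸ huj, h2 ▸ hvj⟩
        · exact ⟨h1 ▸ hvj, h2 ▸ huj⟩
      rcases hoff i j hij with hc | hc
      · exact no_both hui hvi hwi hwalk_j' hc
      · refine no_both huj hvj hwj (fun p => ?_) hc
        rcases he with ⟨h1, h2⟩ | ⟨h1, h2⟩
        · have := hwalk_i (p.copy h1.symm h2.symm)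
          rwa [SimpleGraph.Walk.support_copy, hwe] at this
        · have := hwalk_i (p.reverse.copy h1.symm h2.symm)
          rwa [SimpleGraph.Walk.support_copy, SimpleGraph.Walk.support_reverse,
            List.mem_reverse, hwe] at this
    have hb := Set.ncard_le_ncard_of_injOn f hmaps hinj (Set.toFinite _)
    -- compute the cardinality of the target
    have hcard : ((T k).edgeSet ×ˢ (Set.univ : Set (Fin n))).ncard ≤ n * (n - 1) := by
      rw [Set.ncard_eq_toFinset_card', Set.toFinset_prod, Finset.card_product,
        Set.toFinset_univ, Finset.card_univ, Fintype.card_fin]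
      have htree := (hT k).card_edgeFinset
      rw [Fintype.card_fin] at htree
      have : ((T k).edgeSet.toFinset).card = n - 1 := by
        rw [← SimpleGraph.edgeFinset] at *
        omega
      rw [this, Nat.mul_comm]
    exact hb.trans hcard
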